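/- arXiv:1611.07239 — 4 statements merged into one kernel-verified Lean document; each statement's English description precedes it below -/
import Mathlib

section
/- Let Λ ⊂ F be a finite and monotone set of multi-indices, and let U_Λ = ∑_{i∈Λ} Δ_i be the sparse collocation operator built from tensorized detail operators Δ_i of univariate Lagrange interpolation operators U_k exact on polynomials of degree ≤ k. Then U_Λ p = p for every polynomial p in the span of monomials {ξ^ν : ν ∈ Λ}. -/
open scoped BigOperators

/-- Univariate detail operators `Δ_k = U_k − U_{k−1}` (with `U_{−1} = 0`). -/
noncomputable def detailOp (U : ℕ → Polynomial ℝ →ₗ[ℝ] Polynomial ℝ) :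
    ℕ → Polynomial ℝ →ₗ[ℝ] Polynomial ℝ
  | 0 => U 0
  | (k + 1) => U (k + 1) - U k

/-- The tensorized detail operator `Δ_i = ⊗_m Δ_{i_m}` acting on a polynomial in
countably many variables, factorwise on each monomial. -/
noncomputable def tensorDelta (U : ℕ → Polynomial ℝ →ₗ[ℝ] Polynomial ℝ) (i : ℕ →₀ ℕ)
    (p : MvPolynomial ℕ ℝ) : MvPolynomial ℕ ℝ :=
  ∑ ν ∈ p.support, MvPolynomial.coeff ν p •
    ∏ m ∈ i.support ∪ ν.support,
      Polynomial.aeval (MvPolynomial.X m : MvPolynomial ℕ ℝ)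
        (detailOp U (i m) (Polynomial.X ^ (ν m)))

noncomputable def tdTerm (U : ℕ → Polynomial ℝ →ₗ[ℝ] Polynomial ℝ) (i ν : ℕ →₀ ℕ) :
    MvPolynomial ℕ ℝ :=
  ∏ m ∈ i.support ∪ ν.support,
    Polynomial.aeval (MvPolynomial.X m : MvPolynomial ℕ ℝ)
      (detailOp U (i m) (Polynomial.X ^ (ν m)))

lemma tensorDelta_eq_sum (U : ℕ → Polynomial ℝ →ₗ[ℝ] Polynomial ℝ) (i : ℕ →₀ ℕ)
    (p : MvPolynomial ℕ ℝ) (A : Finset (ℕ →₀ ℕ)) (h : p.support ⊆ A) :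
    tensorDelta U i p = ∑ ν ∈ A, MvPolynomial.coeff ν p • tdTerm U i ν := by
  rw [tensorDelta]
  exact Finset.sum_subset h (fun ν _ hν => by
    rw [MvPolynomial.notMem_support_iff.mp hν, zero_smul])

lemma tensorDelta_add (U : ℕ → Polynomial ℝ →ₗ[ℝ] Polynomial ℝ) (i : ℕ →₀ ℕ)
    (p q : MvPolynomial ℕ ℝ) :
    tensorDelta U i (p + q) = tensorDelta U i p + tensorDelta U i q := by
  classical
  rw [tensorDelta_eq_sum U i (p + q) (p.support ∪ q.support)
      (MvPolynomial.support_add),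
    tensorDelta_eq_sum U i p (p.support ∪ q.support) Finset.subset_union_left,
    tensorDelta_eq_sum U i q (p.support ∪ q.support) Finset.subset_union_right,
    ← Finset.sum_add_distrib]
  refine Finset.sum_congr rfl fun ν _ => ?_
  rw [MvPolynomial.coeff_add, add_smul]

lemma tensorDelta_smul (U : ℕ → Polynomial ℝ →ₗ[ℝ] Polynomial ℝ) (i : ℕ →₀ ℕ)
    (c : ℝ) (p : MvPolynomial ℕ ℝ) :
    tensorDelta U i (c • p) = c • tensorDelta U i p := by
  classical
  rw [tensorDelta_eq_sum U i (c • p) p.support (MvPolynomial.support_smul),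
    tensorDelta_eq_sum U i p p.support subset_rfl, Finset.smul_sum]
  refine Finset.sum_congr rfl fun ν _ => ?_
  rw [MvPolynomial.coeff_smul, smul_eq_mul, mul_smul]

lemma detail_zero (U : ℕ → Polynomial ℝ →ₗ[ℝ] Polynomial ℝ)
    (hexact : ∀ k : ℕ, ∀ p : Polynomial ℝ, p.natDegree ≤ k → U k p = p)
    {k n : ℕ} (h : n < k) : detailOp U k (Polynomial.X ^ n) = 0 := by
  cases k with
  | zero => omega
  | succ k =>
    have h1 : (Polynomial.X ^ n : Polynomial ℝ).natDegree ≤ k + 1 := by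
      simp [Polynomial.natDegree_X_pow]; omega
    have h2 : (Polynomial.X ^ n : Polynomial ℝ).natDegree ≤ k := by
      simp [Polynomial.natDegree_X_pow]; omega
    simp [detailOp, LinearMap.sub_apply, hexact _ _ h1, hexact _ _ h2]

lemma detail_tel (U : ℕ → Polynomial ℝ →ₗ[ℝ] Polynomial ℝ) (n K : ℕ) :
    ∑ k ∈ Finset.range (K + 1), detailOp U k (Polynomial.X ^ n : Polynomial ℝ)
      = U K (Polynomial.X ^ n) := by
  induction K with
  | zero => simp [detailOp]
  | succ K ih =>
    rw [Finset.sum_range_succ, ih]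
    simp [detailOp, LinearMap.sub_apply]

lemma key_sum (U : ℕ → Polynomial ℝ →ₗ[ℝ] Polynomial ℝ)
    (hexact : ∀ k : ℕ, ∀ p : Polynomial ℝ, p.natDegree ≤ k → U k p = p)
    (Λ : Finset (ℕ →₀ ℕ))
    (hmono : ∀ ν ∈ Λ, ∀ μ : ℕ →₀ ℕ, μ ≤ ν → μ ∈ Λ)
    (ν : ℕ →₀ ℕ) (hν : ν ∈ Λ) :
    ∑ i ∈ Λ, tdTerm U i ν = MvPolynomial.monomial ν (1 : ℝ) := by
  classical
  set S := ν.support with hS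
  set g : ℕ → ℕ → MvPolynomial ℕ ℝ := fun m k =>
    Polynomial.aeval (MvPolynomial.X m : MvPolynomial ℕ ℝ)
      (detailOp U k (Polynomial.X ^ (ν m))) with hg
  -- restrict to i ≤ ν
  have hstep1 : ∑ i ∈ Λ, tdTerm U i ν = ∑ i ∈ Λ.filter (fun i => i ≤ ν), tdTerm U i ν := by
    refine (Finset.sum_subset (Finset.filter_subset _ _) ?_).symm
    intro i hi hni
    rw [Finset.mem_filter, not_and] at hni
    have hle : ¬ i ≤ ν := hni hi
    rw [Finsupp.le_def] at hle
    push_neg at hle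
    obtain ⟨m, hm⟩ := hle
    have hmem : m ∈ i.support ∪ ν.support :=
      Finset.mem_union_left _ (Finsupp.mem_support_iff.mpr (by omega))
    refine Finset.prod_eq_zero hmem ?_
    rw [detail_zero U hexact hm, map_zero]
  -- on i ≤ ν, the term is a product over S
  have hterm : ∀ i ∈ Λ.filter (fun i => i ≤ ν), tdTerm U i ν = ∏ m ∈ S, g m (i m) := by
    intro i hi
    have hle : i ≤ ν := (Finset.mem_filter.mp hi).2
    have hsub : i.support ⊆ ν.support := by
      intro m hm
      rw [Finsupp.mem_support_iff] at hm ⊢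
      have := Finsupp.le_def.mp hle m
      omega
    rw [tdTerm, Finset.union_eq_right.mpr hsub]
  rw [hstep1, Finset.sum_congr rfl hterm]
  -- product of telescoping sums
  have hprod : ∏ m ∈ S, ∑ k ∈ Finset.range (ν m + 1), g m k
      = MvPolynomial.monomial ν (1 : ℝ) := by
    have : ∀ m ∈ S, ∑ k ∈ Finset.range (ν m + 1), g m k
        = (MvPolynomial.X m : MvPolynomial ℕ ℝ) ^ (ν m) := by
      intro m _
      rw [hg, ← map_sum, detail_tel U (ν m) (ν m),
        hexact _ _ (by simp [Polynomial.natDegree_X_pow]), map_pow, Polynomial.aeval_X]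
    rw [Finset.prod_congr rfl this, MvPolynomial.monomial_eq, map_one, one_mul,
      Finsupp.prod]
  rw [← hprod, Finset.prod_sum]
  -- bijection between filter and pi
  refine Finset.sum_nbij' (fun i => fun m _ => i m)
    (fun p => Finsupp.indicator S p) ?_ ?_ ?_ ?_ ?_
  · intro i hi
    have hle : i ≤ ν := (Finset.mem_filter.mp hi).2
    rw [Finset.mem_pi]
    intro m hm
    show i m ∈ Finset.range (ν m + 1)
    rw [Finset.mem_range]
    have := Finsupp.le_def.mp hle m
    omega
  · intro p hp
    rw [Finset.mem_pi] at hp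
    have hle : Finsupp.indicator S p ≤ ν := by
      rw [Finsupp.le_def]
      intro m
      rw [Finsupp.indicator_apply]
      split
      · next h => have := hp m h; rw [Finset.mem_range] at this; omega
      · exact Nat.zero_le _
    exact Finset.mem_filter.mpr ⟨hmono ν hν _ hle, hle⟩
  · intro i hi
    have hle : i ≤ ν := (Finset.mem_filter.mp hi).2
    have hsub : i.support ⊆ S := by
      intro m hm
      rw [Finsupp.mem_support_iff] at hm
      rw [hS, Finsupp.mem_support_iff]
      have := Finsupp.le_def.mp hle m
      omega
    ext m
    rw [Finsupp.indicator_apply]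
    split
    · rfl
    · next h =>
      by_contra hc
      exact h (hsub (Finsupp.mem_support_iff.mpr (fun h0 => hc h0.symm)))
  · intro p hp
    funext m hm
    show Finsupp.indicator S p m = p m hm
    rw [Finsupp.indicator_apply, dif_pos hm]
  · intro i hi
    rw [← Finset.prod_attach S (fun m => g m (i m))]

/-- Polynomial exactness of sparse collocation: if `Λ` is finite and monotone,
the sparse collocation operator `U_Λ = ∑_{i∈Λ} Δ_i` reproduces every polynomial
in the span of the monomials `ξ^ν`, `ν ∈ Λ`. -/
theorem sparse_collocation_exact (U : ℕ → Polynomial ℝ →ₗ[ℝ] Polynomial ℝ)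
    (hexact : ∀ k : ℕ, ∀ p : Polynomial ℝ, p.natDegree ≤ k → U k p = p)
    (Λ : Finset (ℕ →₀ ℕ))
    (hmono : ∀ ν ∈ Λ, ∀ μ : ℕ →₀ ℕ, μ ≤ ν → μ ∈ Λ) :
    ∀ p ∈ Submodule.span ℝ
        {q : MvPolynomial ℕ ℝ | ∃ ν ∈ Λ, q = MvPolynomial.monomial ν (1 : ℝ)},
      ∑ i ∈ Λ, tensorDelta U i p = p := by
  intro p hp
  induction hp using Submodule.span_induction with
  | mem q hq =>
    obtain ⟨ν, hν, rfl⟩ := hq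
    have hmem : ν ∈ (MvPolynomial.monomial ν (1 : ℝ)).support := by
      rw [MvPolynomial.mem_support_iff, MvPolynomial.coeff_monomial, if_pos rfl]
      norm_num
    have : ∀ i ∈ Λ, tensorDelta U i (MvPolynomial.monomial ν (1 : ℝ)) = tdTerm U i ν := by
      intro i _
      rw [tensorDelta_eq_sum U i _ {ν}
        (by rw [MvPolynomial.support_monomial]; simp)]
      simp [MvPolynomial.coeff_monomial]
    rw [Finset.sum_congr rfl this]
    exact key_sum U hexact Λ hmono ν hν
  | zero => simp [tensorDelta]
  | add x y _ _ hx hy =>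
    have : ∀ i ∈ Λ, tensorDelta U i (x + y) = tensorDelta U i x + tensorDelta U i y :=
      fun i _ => tensorDelta_add U i x y
    rw [Finset.sum_congr rfl this, Finset.sum_add_distrib, hx, hy]
  | smul c x _ hx =>
    have : ∀ i ∈ Λ, tensorDelta U i (c • x) = c • tensorDelta U i x :=
      fun i _ => tensorDelta_smul U i c x
    rw [Finset.sum_congr rfl this, ← Finset.smul_sum, hx]
end

section
/- For every finitely supported multi-index ν ∈ F there exists a bijection n : R_ν → {1, …, |R_ν|} such that ∏_{m≥1}(1 + i_m) ≤ n(i) for all i ∈ R_ν, where R_ν = {i : i ≤ ν componentwise}. -/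
open scoped BigOperators

/-- For every finitely supported multi-index `ν` there is an ordering (bijection)
`n : R_ν → {1, …, |R_ν|}` of the rectangular envelope `R_ν = {i : i ≤ ν}` such
that the tensor grid size `∏_m (1 + i_m)` is bounded by `n(i)`. -/
theorem exists_ordering_envelope (ν : ℕ →₀ ℕ) :
    ∃ n : (ℕ →₀ ℕ) → ℕ,
      Set.BijOn n (↑(Finset.Iic ν)) (↑(Finset.Icc 1 (Finset.Iic ν).card)) ∧
      ∀ i ∈ Finset.Iic ν, ∏ m ∈ i.support, (1 + i m) ≤ n i := by
  classical
  set N := (Finset.Iic ν).card with hN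
  set f : (ℕ →₀ ℕ) →o LinearExtension (ℕ →₀ ℕ) := toLinearExtension
  have hfinj : Function.Injective f := fun a b h => h
  set s' : Finset (LinearExtension (ℕ →₀ ℕ)) := (Finset.Iic ν).image f with hs'
  have hcard : s'.card = N := Finset.card_image_of_injective _ hfinj
  set e := s'.orderIsoOfFin hcard with he
  have hmem : ∀ i ∈ Finset.Iic ν, f i ∈ s' := fun i hi => Finset.mem_image_of_mem f hi
  set g : (ℕ →₀ ℕ) → ℕ :=
    fun i => if h : i ∈ Finset.Iic ν then (e.symm ⟨f i, hmem i h⟩).val else 0 with hg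
  have hginj : ∀ a ∈ Finset.Iic ν, ∀ b ∈ Finset.Iic ν, g a = g b → a = b := by
    intro a ha b hb hab
    simp only [hg, ha, hb, dif_pos] at hab
    have : (⟨f a, hmem a ha⟩ : {x // x ∈ s'}) = ⟨f b, hmem b hb⟩ :=
      e.symm.injective (Fin.val_injective hab)
    exact hfinj (Subtype.mk_eq_mk.mp this)
  have hgmono : ∀ a ∈ Finset.Iic ν, ∀ b ∈ Finset.Iic ν, a ≤ b → g a ≤ g b := by
    intro a ha b hb hab
    simp only [hg, ha, hb, dif_pos]
    exact e.symm.monotone (Subtype.mk_le_mk.mpr (f.monotone hab))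
  refine ⟨fun i => g i + 1, ⟨?_, ?_, ?_⟩, ?_⟩
  · -- MapsTo
    intro i hi
    simp only [Finset.mem_coe] at hi
    simp only [Finset.coe_Icc, Set.mem_Icc, hg, hi, dif_pos]
    exact ⟨Nat.succ_le_succ (Nat.zero_le _), Nat.succ_le_of_lt (e.symm ⟨f i, hmem i hi⟩).2⟩
  · -- InjOn
    intro a ha b hb hab
    simp only [Finset.mem_coe] at ha hb
    exact hginj a ha b hb (Nat.succ_injective hab)
  · -- SurjOn
    intro k hk
    simp only [Finset.coe_Icc, Set.mem_Icc] at hk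
    have hk1 : k - 1 < N := by omega
    have hx : (e ⟨k - 1, hk1⟩ : LinearExtension (ℕ →₀ ℕ)) ∈ s' := (e ⟨k - 1, hk1⟩).2
    obtain ⟨i, hi, hfi⟩ := Finset.mem_image.mp hx
    refine ⟨i, hi, ?_⟩
    have hgi : g i = (e.symm ⟨f i, hmem i hi⟩).val := by simp only [hg, hi, dif_pos]
    show g i + 1 = k
    rw [hgi]
    have : (⟨f i, hmem i hi⟩ : {x // x ∈ s'}) = e ⟨k - 1, hk1⟩ := Subtype.ext hfi
    rw [this, OrderIso.symm_apply_apply, Fin.val_mk]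
    omega
  · -- bound
    intro i hi
    have hsub : Finset.Iic i ⊆ Finset.Iic ν := Finset.Iic_subset_Iic.mpr (Finset.mem_Iic.mp hi)
    have h1 : ∏ m ∈ i.support, (1 + i m) = (Finset.Iic i).card := by
      rw [Finsupp.card_Iic]
      exact Finset.prod_congr rfl fun m _ => by rw [Nat.card_Iic, Nat.add_comm]
    rw [h1]
    calc (Finset.Iic i).card ≤ (Finset.range (g i + 1)).card := by
          apply Finset.card_le_card_of_injOn g
          · intro j hj
            rw [Finset.mem_coe, Finset.mem_range, Nat.lt_succ_iff]
            exact hgmono j (hsub hj) i hi (Finset.mem_Iic.mp hj)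
          · intro a ha b hb hab
            exact hginj a (hsub ha) b (hsub hb) hab
      _ = g i + 1 := Finset.card_range _
end

section
/- For every finitely supported multi-index ν ∈ F: ∑_{i ≤ ν} ∏_{m≥1}(1 + i_m) ≤ |R_ν|(|R_ν| + 1)/2, where |R_ν| = ∏_{m≥1}(1 + ν_m). -/
open scoped BigOperators

lemma envelope_prod_pos (f : ℕ →₀ ℕ) : 1 ≤ f.prod (fun _ x => 1 + x) := by
  refine Finset.one_le_prod' ?_
  intro m _
  exact Nat.le_add_right 1 (f m)

lemma envelope_sum_decomp (a b : ℕ) (f : ℕ →₀ ℕ) (ha : a ∉ f.support)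
    (g : (ℕ →₀ ℕ) → ℕ) :
    ∑ i ∈ Finset.Iic (Finsupp.single a b + f), g i =
      ∑ p ∈ Finset.range (b + 1) ×ˢ Finset.Iic f, g (Finsupp.single a p.1 + p.2) := by
  have hfa : f a = 0 := Finsupp.notMem_support_iff.mp ha
  refine Finset.sum_nbij' (fun i => (i a, i.erase a))
    (fun p => Finsupp.single a p.1 + p.2) ?_ ?_ ?_ ?_ ?_
  · intro i hi
    rw [Finset.mem_Iic] at hi
    rw [Finset.mem_product, Finset.mem_range, Finset.mem_Iic]
    constructor
    · have := hi a
      simpa [hfa] using Nat.lt_succ_of_le this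
    · intro m
      by_cases hm : m = a
      · subst hm; simp
      · have := hi m
        simpa [Finsupp.erase_ne hm, Finsupp.single_apply, Ne.symm hm] using this
  · intro p hp
    rw [Finset.mem_product, Finset.mem_range, Finset.mem_Iic] at hp
    rw [Finset.mem_Iic]
    intro m
    by_cases hm : m = a
    · subst hm
      have : p.2 m = 0 := by
        have := hp.2 m
        omega
      simp [this, hfa, Nat.lt_succ_iff.mp hp.1]
    · have := hp.2 m
      simpa [Finsupp.single_apply, Ne.symm hm] using this
  · intro i _
    simp [Finsupp.single_add_erase]
  · intro p hp
    rw [Finset.mem_product, Finset.mem_range, Finset.mem_Iic] at hp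
    have hp2a : p.2 a = 0 := by
      have := hp.2 a
      omega
    ext
    · simp [hp2a]
    · simp only
      rw [Finsupp.erase_add, Finsupp.erase_single]
      rw [Finsupp.erase_of_notMem_support (Finsupp.notMem_support_iff.mpr hp2a)]
      simp
  · intro i hi
    rw [Finset.mem_Iic] at hi
    congr 1
    exact (Finsupp.single_add_erase a i).symm

lemma envelope_gauss (b : ℕ) :
    2 * ∑ j ∈ Finset.range (b + 1), (1 + j) = (b + 1) * (b + 2) := by
  induction b with
  | zero => simp
  | succ n ihn =>
    rw [Finset.sum_range_succ, Nat.mul_add, ihn]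
    ring

lemma envelope_aux (ν : ℕ →₀ ℕ) :
    2 * ∑ i ∈ Finset.Iic ν, i.prod (fun _ x => 1 + x) ≤
      (ν.prod fun _ x => 1 + x) * ((ν.prod fun _ x => 1 + x) + 1) := by
  induction ν using Finsupp.induction with
  | zero =>
    have h : Finset.Iic (0 : ℕ →₀ ℕ) = {0} := by
      ext i
      simp [Finset.mem_Iic, le_bot_iff]
    rw [h]
    simp
  | single_add a b f ha hb ih =>
    have hfa : f a = 0 := Finsupp.notMem_support_iff.mp ha
    have hdisj : Disjoint (Finsupp.single a b).support f.support := by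
      rw [Finsupp.support_single_ne_zero a hb]
      simpa using ha
    have hN : (Finsupp.single a b + f).prod (fun _ x => 1 + x)
        = (1 + b) * f.prod (fun _ x => 1 + x) := by
      rw [Finsupp.prod_add_index_of_disjoint hdisj]
      congr 1
      exact Finsupp.prod_single_index (by simp)
    rw [envelope_sum_decomp a b f ha, Finset.sum_product, hN]
    have hterm : ∀ j ∈ Finset.range (b + 1), ∀ i' ∈ Finset.Iic f,
        (Finsupp.single a j + i').prod (fun _ x => 1 + x)
          = (1 + j) * i'.prod (fun _ x => 1 + x) := by
      intro j _ i' hi'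
      rw [Finset.mem_Iic] at hi'
      have hi'a : i' a = 0 := by
        have := hi' a
        omega
      have hdisj' : Disjoint (Finsupp.single a j).support i'.support := by
        intro s hs1 hs2 x hx
        have h1 := hs1 hx
        have h2 := hs2 hx
        have := Finsupp.support_single_subset h1
        simp only [Finset.mem_singleton] at this
        subst this
        exact absurd (Finsupp.mem_support_iff.mp h2) (by simp [hi'a])
      rw [Finsupp.prod_add_index_of_disjoint hdisj']
      congr 1
      exact Finsupp.prod_single_index (by simp)
    rw [Finset.sum_congr rfl (fun j hj => Finset.sum_congr rfl (fun i' hi' =>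
      hterm j hj i' hi'))]
    set S := ∑ i ∈ Finset.Iic f, i.prod (fun _ x => 1 + x) with hS
    set N := f.prod (fun _ x => 1 + x) with hNdef
    have hcollapse : ∑ j ∈ Finset.range (b + 1), ∑ i' ∈ Finset.Iic f,
        (1 + j) * i'.prod (fun _ x => 1 + x)
        = (∑ j ∈ Finset.range (b + 1), (1 + j)) * S := by
      rw [Finset.sum_mul]
      exact Finset.sum_congr rfl fun j _ => (Finset.mul_sum _ _ _).symm
    rw [hcollapse]
    have hgauss := envelope_gauss b
    have hN1 : 1 ≤ N := envelope_prod_pos f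
    have hb1 : 1 ≤ b := Nat.one_le_iff_ne_zero.mpr hb
    -- 2 * ((∑ (1+j)) * S) ≤ (b+1)(b+2)/2 * N(N+1)  etc.
    calc 2 * ((∑ j ∈ Finset.range (b + 1), (1 + j)) * S)
        = (∑ j ∈ Finset.range (b + 1), (1 + j)) * (2 * S) := by ring
      _ ≤ (∑ j ∈ Finset.range (b + 1), (1 + j)) * (N * (N + 1)) :=
          Nat.mul_le_mul_left _ ih
      _ ≤ (1 + b) * N * ((1 + b) * N + 1) := by
          refine Nat.le_of_mul_le_mul_left ?_ (show 0 < 2 by norm_num)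
          calc 2 * ((∑ j ∈ Finset.range (b + 1), (1 + j)) * (N * (N + 1)))
              = (2 * ∑ j ∈ Finset.range (b + 1), (1 + j)) * (N * (N + 1)) := by ring
            _ = (b + 1) * (b + 2) * (N * (N + 1)) := by rw [hgauss]
            _ = ((1 + b) * N) * ((b + 2) * (N + 1)) := by ring
            _ ≤ ((1 + b) * N) * (2 * ((1 + b) * N + 1)) := by
                refine Nat.mul_le_mul_left _ ?_
                have hbN : b * 1 ≤ b * N := Nat.mul_le_mul_left b hN1
                nlinarith
            _ = 2 * ((1 + b) * N * ((1 + b) * N + 1)) := by ring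

/-- The total number of tensor-grid points over the rectangular envelope:
`∑_{i ≤ ν} ∏_m (1 + i_m) ≤ |R_ν|(|R_ν| + 1)/2` where `|R_ν| = ∏_m (1 + ν_m)`. -/
theorem sum_gridsizes_envelope_le (ν : ℕ →₀ ℕ) :
    ∑ i ∈ Finset.Iic ν, ∏ m ∈ i.support, (1 + i m) ≤
      (∏ m ∈ ν.support, (1 + ν m)) * ((∏ m ∈ ν.support, (1 + ν m)) + 1) / 2 := by
  have h := envelope_aux ν
  rw [Nat.le_div_iff_mul_le (by norm_num : 0 < 2)]
  calc (∑ i ∈ Finset.Iic ν, ∏ m ∈ i.support, (1 + i m)) * 2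
      = 2 * ∑ i ∈ Finset.Iic ν, Finsupp.prod i (fun _ x => 1 + x) := by
        rw [Nat.mul_comm]; rfl
    _ ≤ _ := h
end

section
/- Let Λ ⊂ F be a finite monotone set of multi-indices and let Ξ_Λ = ⋃_{i∈Λ} Ξ^{(i)} be the associated sparse grid, where each tensor grid Ξ^{(i)} has cardinality ∏_m (1+i_m). Then |Ξ_Λ| ≤ |Λ|(|Λ|+1)/2; in particular |Ξ_Λ| ∈ O(|Λ|²). -/
open scoped BigOperators

private lemma sum_filter_le_card {α : Type*} [PartialOrder α]
    [DecidableEq α] [DecidableRel ((· ≤ ·) : α → α → Prop)] (s : Finset α) :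
    ∑ i ∈ s, (s.filter (fun j => j ≤ i)).card ≤ s.card * (s.card + 1) / 2 := by
  rw [Nat.le_div_iff_mul_le (by norm_num)]
  induction s using Finset.strongInduction with
  | _ s ih =>
    rcases s.eq_empty_or_nonempty with rfl | hne
    · simp
    · obtain ⟨a, ha, hmax⟩ := Set.Finite.exists_maximalFor id (↑s : Set α) s.finite_toSet
        (by exact_mod_cast hne)
      simp only [id] at hmax
      set t := s.erase a with ht
      have hst : s = insert a t := by
        rw [ht, Finset.insert_erase ha]
      have htcard : t.card + 1 = s.card := by
        rw [ht, Finset.card_erase_of_mem ha]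
        have := Finset.card_pos.mpr hne
        omega
      have hat : a ∉ t := Finset.notMem_erase a s
      have hsum : ∑ i ∈ s, (s.filter (fun j => j ≤ i)).card
          = (s.filter (fun j => j ≤ a)).card
            + ∑ i ∈ t, (s.filter (fun j => j ≤ i)).card := by
        rw [hst, Finset.sum_insert hat]
      have hfilt : ∀ i ∈ t, (s.filter (fun j => j ≤ i)) = t.filter (fun j => j ≤ i) := by
        intro i hi
        rw [hst, Finset.filter_insert]
        have hai : ¬ a ≤ i := by
          intro hle
          have := le_antisymm hle (hmax (Finset.mem_coe.mpr (hst ▸ Finset.mem_insert_of_mem hi)) hle)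
          exact hat (this ▸ hi)
        rw [if_neg hai]
      have hsum2 : ∑ i ∈ t, (s.filter (fun j => j ≤ i)).card
          = ∑ i ∈ t, (t.filter (fun j => j ≤ i)).card :=
        Finset.sum_congr rfl (fun i hi => by rw [hfilt i hi])
      have hih := ih t (by rw [ht]; exact Finset.erase_ssubset ha)
      have h1 : (s.filter (fun j => j ≤ a)).card ≤ s.card :=
        Finset.card_filter_le _ _
      rw [hsum, hsum2]
      have hts : t.card * (t.card + 1) ≤ s.card * s.card := by nlinarith [htcard]
      nlinarith [hih, h1, htcard]

/-- Quadratic bound on the size of the sparse grid associated with a finite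
monotone multi-index set `Λ`: with univariate node sets of cardinality `k+1` at
level `k`, the sparse grid `Ξ_Λ = ⋃_{i∈Λ} Ξ^{(i)}` (where `Ξ^{(i)}` is the
tensor grid with nodes `nodes (i m)` in variable `m`) satisfies
`|Ξ_Λ| ≤ |Λ|(|Λ|+1)/2`. -/
theorem sparse_grid_card_le (Λ : Finset (ℕ →₀ ℕ))
    (hmono : ∀ a ∈ Λ, ∀ b : ℕ →₀ ℕ, b ≤ a → b ∈ Λ)
    (nodes : ℕ → Finset ℝ) (hcard : ∀ k, (nodes k).card = k + 1) :
    (⋃ i ∈ (Λ : Set (ℕ →₀ ℕ)), {ξ : ℕ → ℝ | ∀ m, ξ m ∈ nodes (i m)}).ncard ≤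
      Λ.card * (Λ.card + 1) / 2 := by
  classical
  obtain ⟨a0, ha0⟩ : ∃ a, nodes 0 = {a} := Finset.card_eq_one.mp (hcard 0)
  set T : (ℕ →₀ ℕ) → Finset (ℕ → ℝ) := fun i =>
    (i.support.pi (fun m => nodes (i m))).image
      (fun f m => if h : m ∈ i.support then f m h else a0) with hT
  have hmem : ∀ (i : ℕ →₀ ℕ) (ξ : ℕ → ℝ), ξ ∈ T i ↔ ∀ m, ξ m ∈ nodes (i m) := by
    intro i ξ
    constructor
    · rintro hx
      simp only [hT, Finset.mem_image] at hx
      obtain ⟨f, hf, rfl⟩ := hx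
      intro m
      by_cases h : m ∈ i.support
      · simpa [h] using Finset.mem_pi.mp hf m h
      · have h0 : i m = 0 := Finsupp.notMem_support_iff.mp h
        simp [h, h0, ha0]
    · intro hx
      simp only [hT, Finset.mem_image]
      refine ⟨fun m _ => ξ m, Finset.mem_pi.mpr (fun m _ => hx m), ?_⟩
      funext m
      by_cases h : m ∈ i.support
      · simp [h]
      · have h0 : i m = 0 := Finsupp.notMem_support_iff.mp h
        have := hx m
        rw [h0, ha0, Finset.mem_singleton] at this
        simp [h, this]
  have hset : (⋃ i ∈ (Λ : Set (ℕ →₀ ℕ)), {ξ : ℕ → ℝ | ∀ m, ξ m ∈ nodes (i m)})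
      = ↑(Λ.biUnion T) := by
    ext ξ
    simp only [Set.mem_iUnion, Finset.coe_biUnion, Set.mem_setOf_eq, Finset.mem_coe,
      Finset.mem_biUnion, exists_prop]
    constructor
    · rintro ⟨i, hi, hξ⟩; exact ⟨i, hi, (hmem i ξ).mpr hξ⟩
    · rintro ⟨i, hi, hξ⟩; exact ⟨i, hi, (hmem i ξ).mp hξ⟩
  rw [hset, Set.ncard_coe_finset]
  calc (Λ.biUnion T).card ≤ ∑ i ∈ Λ, (T i).card := Finset.card_biUnion_le
    _ ≤ ∑ i ∈ Λ, (Λ.filter (fun j => j ≤ i)).card := by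
        refine Finset.sum_le_sum (fun i hi => ?_)
        have h1 : (T i).card ≤ ∏ m ∈ i.support, (i m + 1) := by
          refine le_trans (Finset.card_image_le) ?_
          rw [Finset.card_pi]
          exact le_of_eq (Finset.prod_congr rfl (fun m _ => hcard (i m)))
        have h2 : (Finset.Iic i).card = ∏ m ∈ i.support, (i m + 1) := by
          rw [Finsupp.card_Iic]
          exact Finset.prod_congr rfl (fun m _ => by rw [Nat.card_Iic])
        have h3 : Finset.Iic i = Λ.filter (fun j => j ≤ i) := by
          ext j
          simp only [Finset.mem_Iic, Finset.mem_filter]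
          exact ⟨fun h => ⟨hmono i hi j h, h⟩, fun h => h.2⟩
        rw [← h3, h2]
        exact h1
    _ ≤ Λ.card * (Λ.card + 1) / 2 := sum_filter_le_card Λ
end
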